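/- Let f ∈ C(S^d) and suppose the m-point positive-weight quadrature rule {(w_j, x_j)}_{j=1}^m satisfies the Marcinkiewicz–Zygmund property with constant η ∈ [0,1) for degree n, and additionally integrates constants exactly, i.e., Σ_{j=1}^m w_j = |S^d|. Then ‖U_n f‖_{L²} ≤ √(1+η) |S^d|^{1/2} ‖f‖_∞ and ‖U_n f − f‖_{L²} ≤ (√(1+η)+1)|S^d|^{1/2} E_n(f) + √(η²+4η) ‖χ*‖_{L²}, where χ* ∈ P_n(S^d) satisfies ‖f − χ*‖_∞ = E_n(f). -/

import Mathlib

open MeasureTheory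

noncomputable section

/-- `Z(d,ℓ) = (2ℓ+d−1)·Γ(ℓ+d−1)/(Γ(d)·Γ(ℓ+1))`, the number of linearly independent
real spherical harmonics of exact degree `ℓ` on `S^d`. -/
def Zdim (d ℓ : ℕ) : ℕ :=
  (2 * ℓ + d - 1) * Nat.factorial (ℓ + d - 2) / (Nat.factorial (d - 1) * Nat.factorial ℓ)

/-- The unit sphere `S^d = {x ∈ ℝ^{d+1} : ‖x‖₂ = 1}`. -/
abbrev Sph (d : ℕ) : Type :=
  Metric.sphere (0 : EuclideanSpace ℝ (Fin (d + 1))) 1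

/-- The surface measure `ω_d` on `S^d`: the `d`-dimensional Hausdorff measure. -/
def sphMeasure (d : ℕ) : Measure (Sph d) :=
  MeasureTheory.Measure.hausdorffMeasure (d : ℝ)

/-- The surface area `|S^d| = ∫_{S^d} dω_d`. -/
def surfArea (d : ℕ) : ℝ := (sphMeasure d Set.univ).toReal

/-- `Y : S^d → ℝ` is a spherical harmonic of degree `ℓ`: the restriction to the sphere
of a harmonic polynomial on `ℝ^{d+1}` which is homogeneous of degree `ℓ`. -/
def IsSphericalHarmonic (d ℓ : ℕ) (Y : Sph d → ℝ) : Prop :=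
  ∃ p : MvPolynomial (Fin (d + 1)) ℝ,
    p.IsHomogeneous ℓ ∧
    (∑ i, MvPolynomial.pderiv i (MvPolynomial.pderiv i p)) = 0 ∧
    ∀ x : Sph d, Y x = MvPolynomial.eval (fun i => (x : EuclideanSpace ℝ (Fin (d + 1))) i) p

/-- A complete `L²(ω_d)`-orthonormal system `{Y_{ℓ,k} : k = 1,…,Z(d,ℓ); ℓ = 0,1,2,…}`
of real spherical harmonics on `S^d`. -/
structure SHSetup (d : ℕ) where
  Y : (ℓ : ℕ) → Fin (Zdim d ℓ) → Sph d → ℝ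
  harmonic : ∀ ℓ k, IsSphericalHarmonic d ℓ (Y ℓ k)
  orthonormal : ∀ (ℓ ℓ' : ℕ) (k : Fin (Zdim d ℓ)) (k' : Fin (Zdim d ℓ')),
    ∫ x, Y ℓ k x * Y ℓ' k' x ∂(sphMeasure d) =
      if ℓ = ℓ' ∧ (k : ℕ) = (k' : ℕ) then 1 else 0
  complete : ∀ f : Sph d → ℝ, MemLp f 2 (sphMeasure d) →
    (∀ ℓ k, ∫ x, f x * Y ℓ k x ∂(sphMeasure d) = 0) → f =ᵐ[sphMeasure d] 0

variable {d : ℕ}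

/-- Laplace–Fourier coefficient `f̂_{ℓ,k} = ∫_{S^d} f·Y_{ℓ,k} dω_d`. -/
def coef (S : SHSetup d) (f : Sph d → ℝ) (ℓ : ℕ) (k : Fin (Zdim d ℓ)) : ℝ :=
  ∫ x, f x * S.Y ℓ k x ∂(sphMeasure d)

/-- Membership in `P_n(S^d) = span{Y_{ℓ,k} : ℓ ≤ n}`. -/
def inPn (S : SHSetup d) (n : ℕ) (χ : Sph d → ℝ) : Prop :=
  ∃ c : (ℓ : ℕ) → Fin (Zdim d ℓ) → ℝ,
    χ = fun x => ∑ ℓ ∈ Finset.range (n + 1), ∑ k, c ℓ k * S.Y ℓ k x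

/-- `⟨f,g⟩ = ∫_{S^d} f g dω_d`. -/
def innerL2 (d : ℕ) (f g : Sph d → ℝ) : ℝ := ∫ x, f x * g x ∂(sphMeasure d)

/-- `‖f‖²_{L²}`. -/
def l2NormSq (d : ℕ) (f : Sph d → ℝ) : ℝ := ∫ x, f x ^ 2 ∂(sphMeasure d)

/-- `‖f‖_{L²}`. -/
def l2Norm (d : ℕ) (f : Sph d → ℝ) : ℝ := Real.sqrt (l2NormSq d f)

/-- `‖f‖_∞ = sup_{x ∈ S^d} |f(x)|`. -/
def supNorm (d : ℕ) (f : Sph d → ℝ) : ℝ := ⨆ x : Sph d, |f x|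

/-- The (unfettered) hyperinterpolant
`U_n f = Σ_{ℓ=0}^n Σ_{k} ⟨f, Y_{ℓ,k}⟩_m Y_{ℓ,k}`, where
`⟨f,g⟩_m = Σ_{j=1}^m w_j f(x_j) g(x_j)`. -/
def hyper (S : SHSetup d) (n m : ℕ) (w : Fin m → ℝ) (pts : Fin m → Sph d)
    (f : Sph d → ℝ) : Sph d → ℝ := fun x =>
  ∑ ℓ ∈ Finset.range (n + 1), ∑ k,
    (∑ j, w j * f (pts j) * S.Y ℓ k (pts j)) * S.Y ℓ k x

/-- Marcinkiewicz–Zygmund property with constant `η` for degree `n`: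
`|Σ_j w_j χ(x_j)² − ∫ χ² dω_d| ≤ η ∫ χ² dω_d` for all `χ ∈ P_n(S^d)`. -/
def MZProperty (S : SHSetup d) (n m : ℕ) (w : Fin m → ℝ) (pts : Fin m → Sph d)
    (η : ℝ) : Prop :=
  ∀ χ : Sph d → ℝ, inPn S n χ →
    |∑ j, w j * χ (pts j) ^ 2 - ∫ x, χ x ^ 2 ∂(sphMeasure d)| ≤
      η * ∫ x, χ x ^ 2 ∂(sphMeasure d)

/-- `E_n(f) = inf_{χ ∈ P_n} ‖f − χ‖_∞`, the best uniform approximation error. -/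
def bestUnifErr (S : SHSetup d) (n : ℕ) (f : Sph d → ℝ) : ℝ :=
  sInf {e : ℝ | ∃ χ : Sph d → ℝ, inPn S n χ ∧ e = supNorm d fun x => f x - χ x}

/-- `‖f‖²_{H^s} = Σ_ℓ Σ_k (a_ℓ)⁻¹ |f̂_{ℓ,k}|²`. -/
def sobNormSq (S : SHSetup d) (a : ℕ → ℝ) (f : Sph d → ℝ) : ℝ :=
  ∑' ℓ : ℕ, ∑ k, (a ℓ)⁻¹ * coef S f ℓ k ^ 2

/-- The Sobolev norm `‖f‖_{H^s}` associated with the normalizing sequence `a`. -/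
def sobNorm (S : SHSetup d) (a : ℕ → ℝ) (f : Sph d → ℝ) : ℝ :=
  Real.sqrt (sobNormSq S a f)

/-- Membership in the Sobolev space `H^s(S^d)` (w.r.t. the normalizing sequence `a`). -/
def memHs (S : SHSetup d) (a : ℕ → ℝ) (f : Sph d → ℝ) : Prop :=
  MemLp f 2 (sphMeasure d) ∧ Summable fun ℓ : ℕ => ∑ k, (a ℓ)⁻¹ * coef S f ℓ k ^ 2

/-- The sequence `a` is a valid normalizing sequence for `H^s`: positive and
`a_ℓ ≍ (1+ℓ)^{−2s}`. -/
def IsNormSeq (s : ℝ) (a : ℕ → ℝ) : Prop :=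
  (∀ ℓ, 0 < a ℓ) ∧ ∃ c₁ c₂ : ℝ, 0 < c₁ ∧ 0 < c₂ ∧ ∀ ℓ : ℕ,
    c₁ * (1 + (ℓ : ℝ)) ^ (-(2 * s)) ≤ a ℓ ∧ a ℓ ≤ c₂ * (1 + (ℓ : ℝ)) ^ (-(2 * s))

/-- `x_1,…,x_m` is a QMC design for `H^s(S^d)` with constant `c`:
`|(1/m) Σ_j f(x_j) − ∫ f dω_d| ≤ c·m^{−s/d}·‖f‖_{H^s}` for all `f ∈ H^s(S^d)`. -/
def IsQMCDesign (S : SHSetup d) (s : ℝ) (a : ℕ → ℝ) (m : ℕ)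
    (pts : Fin m → Sph d) (c : ℝ) : Prop :=
  ∀ f : Sph d → ℝ, Continuous f → memHs S a f →
    |(1 / (m : ℝ)) * ∑ j, f (pts j) - ∫ x, f x ∂(sphMeasure d)| ≤
      c * (m : ℝ) ^ (-(s / (d : ℝ))) * sobNorm S a f

/-- The `L²`-orthogonal projection `P_n f = Σ_{ℓ=0}^n Σ_k ⟨f,Y_{ℓ,k}⟩ Y_{ℓ,k}`. -/
def projL2 (S : SHSetup d) (n : ℕ) (f : Sph d → ℝ) : Sph d → ℝ := fun x =>
  ∑ ℓ ∈ Finset.range (n + 1), ∑ k, coef S f ℓ k * S.Y ℓ k x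

/-- `E_n(f; H^s) = inf_{χ ∈ P_n} ‖f − χ‖_{H^s}`. -/
def bestHsErr (S : SHSetup d) (a : ℕ → ℝ) (n : ℕ) (f : Sph d → ℝ) : ℝ :=
  sInf {e : ℝ | ∃ χ : Sph d → ℝ, inPn S n χ ∧ e = sobNorm S a fun x => f x - χ x}


section Statement7Aux

variable {d : ℕ}

private lemma zdim_zero' (hd : 2 ≤ d) : Zdim d 0 = 1 := by
  obtain ⟨e, rfl⟩ := Nat.exists_eq_add_of_le hd
  show (2 * 0 + (2 + e) - 1) * Nat.factorial (0 + (2 + e) - 2) /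
    (Nat.factorial (2 + e - 1) * Nat.factorial 0) = 1
  have h1 : 2 * 0 + (2 + e) - 1 = e + 1 := by omega
  have h2 : 0 + (2 + e) - 2 = e := by omega
  have h3 : 2 + e - 1 = e + 1 := by omega
  rw [h1, h2, h3, Nat.factorial_succ, Nat.factorial_zero, mul_one]
  exact Nat.div_self (Nat.mul_pos (Nat.succ_pos e) (Nat.factorial_pos e))

private lemma Y_cont (S : SHSetup d) (ℓ : ℕ) (k : Fin (Zdim d ℓ)) :
    Continuous (S.Y ℓ k) := by
  obtain ⟨p, -, -, hp⟩ := S.harmonic ℓ k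
  have h1 : Continuous fun x : Sph d => (fun i => (x : EuclideanSpace ℝ (Fin (d + 1))) i) := by
    refine continuous_pi fun i => ?_
    exact ((EuclideanSpace.proj (𝕜 := ℝ) i).continuous).comp continuous_subtype_val
  have h2 := (MvPolynomial.continuous_eval p).comp h1
  exact h2.congr fun x => (hp x).symm

private lemma sph_nonempty : Nonempty (Sph d) := by
  have : (Metric.sphere (0 : EuclideanSpace ℝ (Fin (d + 1))) 1).Nonempty :=
    NormedSpace.sphere_nonempty.mpr zero_le_one
  exact this.to_subtype

private lemma measure_facts (hd : 2 ≤ d) (S : SHSetup d) :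
    IsFiniteMeasure (sphMeasure d) ∧ 0 < surfArea d := by
  have hk : 0 < Zdim d 0 := by rw [zdim_zero' hd]; norm_num
  set k₀ : Fin (Zdim d 0) := ⟨0, hk⟩
  obtain ⟨p, hhom, -, hp⟩ := S.harmonic 0 k₀
  have hdeg : p.totalDegree = 0 := Nat.le_zero.mp hhom.totalDegree_le
  have hmsupp : ∀ m ∈ p.support, m = 0 := by
    intro m hm
    ext i
    exact (MvPolynomial.totalDegree_eq_zero_iff _ p).mp hdeg m hm i
  have hcon : ∀ x y : Sph d, S.Y 0 k₀ x = S.Y 0 k₀ y := by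
    intro x y
    rw [hp x, hp y, MvPolynomial.eval_eq, MvPolynomial.eval_eq]
    refine Finset.sum_congr rfl fun m hms => ?_
    rw [hmsupp m hms]
    simp
  obtain ⟨x₀⟩ := sph_nonempty (d := d)
  set C := S.Y 0 k₀ x₀ with hC
  have h1 : ∫ x, S.Y 0 k₀ x * S.Y 0 k₀ x ∂(sphMeasure d) = 1 := by
    have := S.orthonormal 0 0 k₀ k₀
    simpa using this
  have h2 : ∫ x, S.Y 0 k₀ x * S.Y 0 k₀ x ∂(sphMeasure d)
      = (sphMeasure d Set.univ).toReal * (C * C) := by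
    have he : (fun x : Sph d => S.Y 0 k₀ x * S.Y 0 k₀ x) = fun _ => C * C :=
      funext fun x => by rw [hcon x x₀]
    rw [he, MeasureTheory.integral_const, smul_eq_mul, measureReal_def]
  have key : surfArea d * (C * C) = 1 := by
    rw [surfArea, ← h2, h1]
  have hS0 : 0 ≤ surfArea d := ENNReal.toReal_nonneg
  have hSpos : 0 < surfArea d := by
    rcases hS0.lt_or_eq with h | h
    · exact h
    · exfalso; rw [← h, zero_mul] at key; exact zero_ne_one key
  have hfin : sphMeasure d Set.univ ≠ ⊤ := by
    intro h
    rw [surfArea, h, ENNReal.toReal_top] at hSpos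
    exact lt_irrefl 0 hSpos
  exact ⟨⟨hfin.lt_top⟩, hSpos⟩
private def Pc (S : SHSetup d) (n : ℕ) (c : (ℓ : ℕ) → Fin (Zdim d ℓ) → ℝ) : Sph d → ℝ :=
  fun x => ∑ ℓ ∈ Finset.range (n + 1), ∑ k, c ℓ k * S.Y ℓ k x

private lemma Pc_cont (S : SHSetup d) (n : ℕ) (c : (ℓ : ℕ) → Fin (Zdim d ℓ) → ℝ) :
    Continuous (Pc S n c) := by
  refine continuous_finset_sum _ fun ℓ _ => continuous_finset_sum _ fun k _ => ?_
  exact continuous_const.mul (Y_cont S ℓ k)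

private lemma cont_integrable (hfin : IsFiniteMeasure (sphMeasure d)) {g : Sph d → ℝ}
    (hg : Continuous g) : MeasureTheory.Integrable g (sphMeasure d) := by
  haveI := hfin
  refine hg.integrable_of_hasCompactSupport ?_
  exact IsCompact.of_isClosed_subset isCompact_univ (isClosed_tsupport g) (Set.subset_univ _)

private lemma integral_sum' {ι : Type*} (hfin : IsFiniteMeasure (sphMeasure d))
    (s : Finset ι) (F : ι → Sph d → ℝ) (hF : ∀ i ∈ s, Continuous (F i)) :
    ∫ x, ∑ i ∈ s, F i x ∂(sphMeasure d) = ∑ i ∈ s, ∫ x, F i x ∂(sphMeasure d) :=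
  MeasureTheory.integral_finset_sum s fun i hi => cont_integrable hfin (hF i hi)

private lemma integral_Pc_mul (hfin : IsFiniteMeasure (sphMeasure d)) (S : SHSetup d) (n : ℕ)
    (c c' : (ℓ : ℕ) → Fin (Zdim d ℓ) → ℝ) :
    ∫ x, Pc S n c x * Pc S n c' x ∂(sphMeasure d)
      = ∑ ℓ ∈ Finset.range (n + 1), ∑ k, c ℓ k * c' ℓ k := by
  have hc4 : ∀ (ℓ : ℕ) (k : Fin (Zdim d ℓ)) (ℓ' : ℕ) (k' : Fin (Zdim d ℓ')),
      Continuous fun x : Sph d => c ℓ k * c' ℓ' k' * (S.Y ℓ k x * S.Y ℓ' k' x) :=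
    fun ℓ k ℓ' k' => continuous_const.mul ((Y_cont S ℓ k).mul (Y_cont S ℓ' k'))
  have expand : ∀ x : Sph d, Pc S n c x * Pc S n c' x =
      ∑ ℓ ∈ Finset.range (n + 1), ∑ k, ∑ ℓ' ∈ Finset.range (n + 1), ∑ k',
        c ℓ k * c' ℓ' k' * (S.Y ℓ k x * S.Y ℓ' k' x) := by
    intro x
    show (∑ ℓ ∈ Finset.range (n + 1), ∑ k, c ℓ k * S.Y ℓ k x) *
      (∑ ℓ' ∈ Finset.range (n + 1), ∑ k', c' ℓ' k' * S.Y ℓ' k' x) = _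
    rw [Finset.sum_mul]
    refine Finset.sum_congr rfl fun ℓ _ => ?_
    rw [Finset.sum_mul]
    refine Finset.sum_congr rfl fun k _ => ?_
    rw [Finset.mul_sum]
    refine Finset.sum_congr rfl fun ℓ' _ => ?_
    rw [Finset.mul_sum]
    exact Finset.sum_congr rfl fun k' _ => by ring
  calc ∫ x, Pc S n c x * Pc S n c' x ∂(sphMeasure d)
      = ∫ x, ∑ ℓ ∈ Finset.range (n + 1), ∑ k, ∑ ℓ' ∈ Finset.range (n + 1), ∑ k',
          c ℓ k * c' ℓ' k' * (S.Y ℓ k x * S.Y ℓ' k' x) ∂(sphMeasure d) := by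
        exact MeasureTheory.integral_congr_ae (Filter.Eventually.of_forall expand)
    _ = ∑ ℓ ∈ Finset.range (n + 1), ∑ k, ∑ ℓ' ∈ Finset.range (n + 1), ∑ k',
          c ℓ k * c' ℓ' k' * ∫ x, S.Y ℓ k x * S.Y ℓ' k' x ∂(sphMeasure d) := by
        rw [integral_sum' hfin _ _ (fun ℓ _ => continuous_finset_sum _ fun k _ =>
          continuous_finset_sum _ fun ℓ' _ => continuous_finset_sum _ fun k' _ => hc4 ℓ k ℓ' k')]
        refine Finset.sum_congr rfl fun ℓ _ => ?_
        rw [integral_sum' hfin _ _ (fun k _ => continuous_finset_sum _ fun ℓ' _ =>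
          continuous_finset_sum _ fun k' _ => hc4 ℓ k ℓ' k')]
        refine Finset.sum_congr rfl fun k _ => ?_
        rw [integral_sum' hfin _ _ (fun ℓ' _ => continuous_finset_sum _ fun k' _ =>
          hc4 ℓ k ℓ' k')]
        refine Finset.sum_congr rfl fun ℓ' _ => ?_
        rw [integral_sum' hfin _ _ (fun k' _ => hc4 ℓ k ℓ' k')]
        exact Finset.sum_congr rfl fun k' _ => MeasureTheory.integral_const_mul _ _
    _ = ∑ ℓ ∈ Finset.range (n + 1), ∑ k, c ℓ k * c' ℓ k := by
        refine Finset.sum_congr rfl fun ℓ hℓ => Finset.sum_congr rfl fun k _ => ?_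
        have hside : ∀ ℓ' ∈ Finset.range (n + 1), ℓ' ≠ ℓ →
            (∑ k' : Fin (Zdim d ℓ'), c ℓ k * c' ℓ' k'
              * ∫ x, S.Y ℓ k x * S.Y ℓ' k' x ∂(sphMeasure d)) = 0 := by
          intro ℓ' _ hne
          refine Finset.sum_eq_zero fun k' _ => ?_
          rw [S.orthonormal ℓ ℓ' k k', if_neg (by rintro ⟨h, -⟩; exact hne h.symm), mul_zero]
        rw [Finset.sum_eq_single_of_mem ℓ hℓ hside]
        have hterm : ∀ k' : Fin (Zdim d ℓ),
            c ℓ k * c' ℓ k' * ∫ x, S.Y ℓ k x * S.Y ℓ k' x ∂(sphMeasure d)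
              = if k' = k then c ℓ k * c' ℓ k' else 0 := by
          intro k'
          rw [S.orthonormal ℓ ℓ k k']
          by_cases h : k' = k
          · subst h; simp
          · have hcond : ¬(ℓ = ℓ ∧ (k : ℕ) = (k' : ℕ)) := by
              rintro ⟨-, hv⟩; exact h (Fin.ext hv.symm)
            rw [if_neg hcond, mul_zero, if_neg h]
        simp only [hterm]
        exact Fintype.sum_ite_eq' k fun k' => c ℓ k * c' ℓ k'

private lemma Q_Pc (S : SHSetup d) (n m : ℕ) (w : Fin m → ℝ) (pts : Fin m → Sph d)
    (g : Sph d → ℝ) (c : (ℓ : ℕ) → Fin (Zdim d ℓ) → ℝ) :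
    ∑ j, w j * g (pts j) * Pc S n c (pts j)
      = ∑ ℓ ∈ Finset.range (n + 1), ∑ k,
          (∑ j, w j * g (pts j) * S.Y ℓ k (pts j)) * c ℓ k := by
  have : ∀ j, w j * g (pts j) * Pc S n c (pts j)
      = ∑ ℓ ∈ Finset.range (n + 1), ∑ k, w j * g (pts j) * S.Y ℓ k (pts j) * c ℓ k := by
    intro j
    show w j * g (pts j) * (∑ ℓ ∈ Finset.range (n + 1), ∑ k, c ℓ k * S.Y ℓ k (pts j)) = _
    rw [Finset.mul_sum]
    refine Finset.sum_congr rfl fun ℓ _ => ?_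
    rw [Finset.mul_sum]
    exact Finset.sum_congr rfl fun k _ => by ring
  simp only [this]
  rw [Finset.sum_comm]
  refine Finset.sum_congr rfl fun ℓ _ => ?_
  rw [Finset.sum_comm]
  refine Finset.sum_congr rfl fun k _ => ?_
  rw [Finset.sum_mul]

private lemma Pc_add (S : SHSetup d) (n : ℕ) (a b : (ℓ : ℕ) → Fin (Zdim d ℓ) → ℝ) (x : Sph d) :
    Pc S n (fun ℓ k => a ℓ k + b ℓ k) x = Pc S n a x + Pc S n b x := by
  simp only [Pc]
  rw [← Finset.sum_add_distrib]
  refine Finset.sum_congr rfl fun ℓ _ => ?_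
  rw [← Finset.sum_add_distrib]
  exact Finset.sum_congr rfl fun k _ => by ring

private lemma Pc_sub (S : SHSetup d) (n : ℕ) (a b : (ℓ : ℕ) → Fin (Zdim d ℓ) → ℝ) (x : Sph d) :
    Pc S n (fun ℓ k => a ℓ k - b ℓ k) x = Pc S n a x - Pc S n b x := by
  simp only [Pc]
  rw [← Finset.sum_sub_distrib]
  refine Finset.sum_congr rfl fun ℓ _ => ?_
  rw [← Finset.sum_sub_distrib]
  exact Finset.sum_congr rfl fun k _ => by ring

private lemma wCS {m : ℕ} (w : Fin m → ℝ) (hw : ∀ j, 0 ≤ w j) (a b : Fin m → ℝ) :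
    (∑ j, w j * a j * b j) ^ 2 ≤ (∑ j, w j * a j ^ 2) * ∑ j, w j * b j ^ 2 := by
  have h := Finset.sum_mul_sq_le_sq_mul_sq Finset.univ
    (fun j => Real.sqrt (w j) * a j) (fun j => Real.sqrt (w j) * b j)
  have e1 : ∀ j : Fin m, Real.sqrt (w j) * a j * (Real.sqrt (w j) * b j) = w j * a j * b j := by
    intro j
    rw [mul_mul_mul_comm, Real.mul_self_sqrt (hw j)]
    ring
  have e2 : ∀ j : Fin m, (Real.sqrt (w j) * a j) ^ 2 = w j * a j ^ 2 := by
    intro j; rw [mul_pow, Real.sq_sqrt (hw j)]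
  have e3 : ∀ j : Fin m, (Real.sqrt (w j) * b j) ^ 2 = w j * b j ^ 2 := by
    intro j; rw [mul_pow, Real.sq_sqrt (hw j)]
  simpa only [e1, e2, e3] using h

private lemma abs_le_supNorm {g : Sph d → ℝ} (hg : Continuous g) (x : Sph d) :
    |g x| ≤ supNorm d g := by
  have hb : BddAbove (Set.range fun x : Sph d => |g x|) := by
    have := (isCompact_univ (X := Sph d)).bddAbove_image hg.abs.continuousOn
    rwa [Set.image_univ] at this
  exact le_ciSup hb x

private lemma supNorm_nonneg (g : Sph d → ℝ) : 0 ≤ supNorm d g :=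
  Real.iSup_nonneg fun x => abs_nonneg _

private lemma norm_toLp_eq (hfin : IsFiniteMeasure (sphMeasure d)) {g : Sph d → ℝ}
    (hg : Continuous g) :
    ‖(haveI := hfin; ContinuousMap.toLp (E := ℝ) 2 (sphMeasure d) ℝ ⟨g, hg⟩)‖ = l2Norm d g := by
  haveI := hfin
  have h := MeasureTheory.ContinuousMap.inner_toLp (𝕜 := ℝ) (μ := sphMeasure d)
    (⟨g, hg⟩ : C(Sph d, ℝ)) ⟨g, hg⟩
  have h2 : ∫ x, (⟨g, hg⟩ : C(Sph d, ℝ)) x * (starRingEnd ℝ) ((⟨g, hg⟩ : C(Sph d, ℝ)) x)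
      ∂(sphMeasure d) = ∫ x, g x ^ 2 ∂(sphMeasure d) := by
    refine MeasureTheory.integral_congr_ae (Filter.Eventually.of_forall fun x => ?_)
    simp [sq]
  rw [h2] at h
  rw [real_inner_self_eq_norm_sq] at h
  rw [l2Norm, l2NormSq, ← h, Real.sqrt_sq (norm_nonneg _)]

private lemma l2_triangle3 (hfin : IsFiniteMeasure (sphMeasure d)) {g₁ g₂ g₃ : Sph d → ℝ}
    (h₁ : Continuous g₁) (h₂ : Continuous g₂) (h₃ : Continuous g₃) :
    l2Norm d (fun x => g₁ x + g₂ x - g₃ x) ≤ l2Norm d g₁ + l2Norm d g₂ + l2Norm d g₃ := by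
  haveI := hfin
  have hsum : Continuous fun x => g₁ x + g₂ x - g₃ x := (h₁.add h₂).sub h₃
  have hCeq : (⟨fun x => g₁ x + g₂ x - g₃ x, hsum⟩ : C(Sph d, ℝ))
      = (⟨g₁, h₁⟩ + ⟨g₂, h₂⟩ - ⟨g₃, h₃⟩ : C(Sph d, ℝ)) := by
    ext x; simp
  have key : ContinuousMap.toLp (E := ℝ) 2 (sphMeasure d) ℝ ⟨fun x => g₁ x + g₂ x - g₃ x, hsum⟩
      = ContinuousMap.toLp (E := ℝ) 2 (sphMeasure d) ℝ ⟨g₁, h₁⟩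
        + ContinuousMap.toLp (E := ℝ) 2 (sphMeasure d) ℝ ⟨g₂, h₂⟩
        - ContinuousMap.toLp (E := ℝ) 2 (sphMeasure d) ℝ ⟨g₃, h₃⟩ := by
    rw [hCeq, map_sub, map_add]
  calc l2Norm d (fun x => g₁ x + g₂ x - g₃ x)
      = ‖ContinuousMap.toLp (E := ℝ) 2 (sphMeasure d) ℝ
          ⟨fun x => g₁ x + g₂ x - g₃ x, hsum⟩‖ := (norm_toLp_eq hfin hsum).symm
    _ ≤ ‖ContinuousMap.toLp (E := ℝ) 2 (sphMeasure d) ℝ ⟨g₁, h₁⟩‖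
        + ‖ContinuousMap.toLp (E := ℝ) 2 (sphMeasure d) ℝ ⟨g₂, h₂⟩‖
        + ‖ContinuousMap.toLp (E := ℝ) 2 (sphMeasure d) ℝ ⟨g₃, h₃⟩‖ := by
          rw [key]
          refine le_trans (norm_sub_le _ _) ?_
          exact add_le_add (norm_add_le _ _) le_rfl
    _ = l2Norm d g₁ + l2Norm d g₂ + l2Norm d g₃ := by
          rw [norm_toLp_eq hfin h₁, norm_toLp_eq hfin h₂, norm_toLp_eq hfin h₃]

private lemma l2Norm_le_sup (hfin : IsFiniteMeasure (sphMeasure d)) {g : Sph d → ℝ}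
    (hg : Continuous g) :
    l2Norm d g ≤ Real.sqrt (surfArea d) * supNorm d g := by
  haveI := hfin
  have hmono : ∫ x, g x ^ 2 ∂(sphMeasure d) ≤ ∫ _x, (supNorm d g) ^ 2 ∂(sphMeasure d) := by
    refine MeasureTheory.integral_mono (cont_integrable hfin (hg.pow 2))
      (MeasureTheory.integrable_const _) fun x => ?_
    calc g x ^ 2 = |g x| ^ 2 := (sq_abs _).symm
      _ ≤ (supNorm d g) ^ 2 := pow_le_pow_left₀ (abs_nonneg _) (abs_le_supNorm hg x) 2
  rw [l2Norm, l2NormSq]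
  calc Real.sqrt (∫ x, g x ^ 2 ∂(sphMeasure d))
      ≤ Real.sqrt (∫ _x, (supNorm d g) ^ 2 ∂(sphMeasure d)) := Real.sqrt_le_sqrt hmono
    _ = Real.sqrt (surfArea d * (supNorm d g) ^ 2) := by
        rw [MeasureTheory.integral_const, smul_eq_mul, surfArea, measureReal_def]
    _ = Real.sqrt (surfArea d) * supNorm d g := by
        rw [Real.sqrt_mul (show (0:ℝ) ≤ surfArea d from ENNReal.toReal_nonneg) _,
          Real.sqrt_sq (supNorm_nonneg g)]

private lemma hyper_bound (S : SHSetup d) (n m : ℕ) (w : Fin m → ℝ)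
    (hw : ∀ j, 0 < w j) (pts : Fin m → Sph d) (hsum : (∑ j, w j) = surfArea d)
    (η : ℝ) (hη0 : 0 ≤ η) (hMZ : MZProperty S n m w pts η)
    {g : Sph d → ℝ} (hg : Continuous g) (hfin : IsFiniteMeasure (sphMeasure d)) :
    l2Norm d (hyper S n m w pts g)
      ≤ Real.sqrt (1 + η) * Real.sqrt (surfArea d) * supNorm d g := by
  set β : (ℓ : ℕ) → Fin (Zdim d ℓ) → ℝ :=
    fun ℓ k => ∑ j, w j * g (pts j) * S.Y ℓ k (pts j) with hβ
  have hhyper : hyper S n m w pts g = Pc S n β := rfl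
  set Isq := ∫ x, Pc S n β x * Pc S n β x ∂(sphMeasure d) with hIsq
  have hI2 : Isq = ∑ ℓ ∈ Finset.range (n + 1), ∑ k, β ℓ k * β ℓ k :=
    integral_Pc_mul hfin S n β β
  have hIsq0 : 0 ≤ Isq := by
    rw [hI2]
    exact Finset.sum_nonneg fun ℓ _ => Finset.sum_nonneg fun k _ => mul_self_nonneg _
  have hQ : ∑ j, w j * g (pts j) * Pc S n β (pts j) = Isq := by
    rw [Q_Pc S n m w pts g β, hI2]
  have hintsq : ∫ x, Pc S n β x ^ 2 ∂(sphMeasure d) = Isq := by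
    rw [hIsq]
    refine MeasureTheory.integral_congr_ae (Filter.Eventually.of_forall fun x => ?_)
    simp [sq]
  have hMZ1 := hMZ (Pc S n β) ⟨β, rfl⟩
  rw [hintsq] at hMZ1
  have hQP : ∑ j, w j * Pc S n β (pts j) ^ 2 ≤ (1 + η) * Isq := by
    have := (abs_le.mp hMZ1).2
    linarith
  have hQP0 : 0 ≤ ∑ j, w j * Pc S n β (pts j) ^ 2 :=
    Finset.sum_nonneg fun j _ => mul_nonneg (hw j).le (sq_nonneg _)
  set u := supNorm d g with hu
  have hu0 : 0 ≤ u := supNorm_nonneg g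
  have hS0 : 0 ≤ surfArea d := ENNReal.toReal_nonneg
  have hQg : ∑ j, w j * g (pts j) ^ 2 ≤ surfArea d * u ^ 2 := by
    rw [← hsum, Finset.sum_mul]
    refine Finset.sum_le_sum fun j _ => ?_
    have h1 : g (pts j) ^ 2 ≤ u ^ 2 := by
      calc g (pts j) ^ 2 = |g (pts j)| ^ 2 := (sq_abs _).symm
        _ ≤ u ^ 2 := pow_le_pow_left₀ (abs_nonneg _) (abs_le_supNorm hg (pts j)) 2
    exact mul_le_mul_of_nonneg_left h1 (hw j).le
  have hCS := wCS w (fun j => (hw j).le) (fun j => g (pts j)) (fun j => Pc S n β (pts j))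
  have h1 : Isq ^ 2 ≤ surfArea d * u ^ 2 * ((1 + η) * Isq) := by
    calc Isq ^ 2 = (∑ j, w j * g (pts j) * Pc S n β (pts j)) ^ 2 := by rw [hQ]
      _ ≤ (∑ j, w j * g (pts j) ^ 2) * ∑ j, w j * Pc S n β (pts j) ^ 2 := hCS
      _ ≤ surfArea d * u ^ 2 * ((1 + η) * Isq) := by
          refine mul_le_mul hQg hQP hQP0 (mul_nonneg hS0 (sq_nonneg u))
  have htarget : l2Norm d (hyper S n m w pts g) = Real.sqrt Isq := by
    rw [hhyper, l2Norm, l2NormSq, hintsq]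
  rw [htarget]
  have hK0 : 0 ≤ Real.sqrt (1 + η) * Real.sqrt (surfArea d) * u := by positivity
  rcases hIsq0.lt_or_eq with hpos | h0
  · have hle : Isq ≤ (1 + η) * (surfArea d * u ^ 2) := by nlinarith
    calc Real.sqrt Isq ≤ Real.sqrt ((1 + η) * (surfArea d * u ^ 2)) := Real.sqrt_le_sqrt hle
      _ = Real.sqrt (1 + η) * Real.sqrt (surfArea d) * u := by
          rw [Real.sqrt_mul (by linarith), Real.sqrt_mul hS0, Real.sqrt_sq hu0, mul_assoc]
  · rw [← h0, Real.sqrt_zero]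
    exact hK0

set_option maxHeartbeats 1000000 in
private lemma hyper_poly (S : SHSetup d) (n m : ℕ) (w : Fin m → ℝ)
    (hw : ∀ j, 0 < w j) (pts : Fin m → Sph d)
    (η : ℝ) (hη0 : 0 ≤ η) (hη1 : η < 1) (hMZ : MZProperty S n m w pts η)
    (hfin : IsFiniteMeasure (sphMeasure d)) (cs : (ℓ : ℕ) → Fin (Zdim d ℓ) → ℝ) :
    l2Norm d (fun x => hyper S n m w pts (Pc S n cs) x - Pc S n cs x)
      ≤ Real.sqrt (η ^ 2 + 4 * η) * l2Norm d (Pc S n cs) := by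
  set I : ((ℓ : ℕ) → Fin (Zdim d ℓ) → ℝ) → ((ℓ : ℕ) → Fin (Zdim d ℓ) → ℝ) → ℝ :=
    fun a b => ∑ ℓ ∈ Finset.range (n + 1), ∑ k, a ℓ k * b ℓ k with hIdef
  set Q : (Sph d → ℝ) → (Sph d → ℝ) → ℝ :=
    fun g h => ∑ j, w j * g (pts j) * h (pts j) with hQdef
  have hIint : ∀ a b, ∫ x, Pc S n a x * Pc S n b x ∂(sphMeasure d) = I a b :=
    fun a b => integral_Pc_mul hfin S n a b
  have hInn : ∀ a, 0 ≤ I a a := fun a =>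
    Finset.sum_nonneg fun ℓ _ => Finset.sum_nonneg fun k _ => mul_self_nonneg _
  have hQsq : ∀ g : Sph d → ℝ, (∑ j, w j * g (pts j) ^ 2) = Q g g := by
    intro g
    simp only [hQdef]
    exact Finset.sum_congr rfl fun j _ => by ring
  have hMZc : ∀ a, |Q (Pc S n a) (Pc S n a) - I a a| ≤ η * I a a := by
    intro a
    have h := hMZ (Pc S n a) ⟨a, rfl⟩
    have hs : ∫ x, Pc S n a x ^ 2 ∂(sphMeasure d) = I a a := by
      rw [← hIint a a]
      exact MeasureTheory.integral_congr_ae (Filter.Eventually.of_forall fun x => by simp [sq])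
    rwa [hs, hQsq (Pc S n a)] at h
  have hIexp : ∀ a b, I (fun ℓ k => a ℓ k + b ℓ k) (fun ℓ k => a ℓ k + b ℓ k)
      = I a a + 2 * I a b + I b b := by
    intro a b
    simp only [hIdef]
    calc ∑ ℓ ∈ Finset.range (n + 1), ∑ k, (a ℓ k + b ℓ k) * (a ℓ k + b ℓ k)
        = ∑ ℓ ∈ Finset.range (n + 1), ((∑ k, a ℓ k * a ℓ k)
            + ((∑ k, 2 * (a ℓ k * b ℓ k)) + ∑ k, b ℓ k * b ℓ k)) := by
          refine Finset.sum_congr rfl fun ℓ _ => ?_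
          rw [← Finset.sum_add_distrib, ← Finset.sum_add_distrib]
          exact Finset.sum_congr rfl fun k _ => by ring
      _ = _ := by
          rw [Finset.sum_add_distrib, Finset.sum_add_distrib]
          simp only [← Finset.mul_sum]
          ring
  have hIexm : ∀ a b, I (fun ℓ k => a ℓ k - b ℓ k) (fun ℓ k => a ℓ k - b ℓ k)
      = I a a - 2 * I a b + I b b := by
    intro a b
    simp only [hIdef]
    calc ∑ ℓ ∈ Finset.range (n + 1), ∑ k, (a ℓ k - b ℓ k) * (a ℓ k - b ℓ k)
        = ∑ ℓ ∈ Finset.range (n + 1), ((∑ k, a ℓ k * a ℓ k)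
            + ((∑ k, (-2) * (a ℓ k * b ℓ k)) + ∑ k, b ℓ k * b ℓ k)) := by
          refine Finset.sum_congr rfl fun ℓ _ => ?_
          rw [← Finset.sum_add_distrib, ← Finset.sum_add_distrib]
          exact Finset.sum_congr rfl fun k _ => by ring
      _ = _ := by
          rw [Finset.sum_add_distrib, Finset.sum_add_distrib]
          simp only [← Finset.mul_sum]
          ring
  have hQexp : ∀ a b, Q (Pc S n (fun ℓ k => a ℓ k + b ℓ k)) (Pc S n (fun ℓ k => a ℓ k + b ℓ k))
      = Q (Pc S n a) (Pc S n a) + 2 * Q (Pc S n a) (Pc S n b) + Q (Pc S n b) (Pc S n b) := by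
    intro a b
    simp only [hQdef]
    calc ∑ j, w j * Pc S n (fun ℓ k => a ℓ k + b ℓ k) (pts j)
          * Pc S n (fun ℓ k => a ℓ k + b ℓ k) (pts j)
        = ∑ j, (w j * Pc S n a (pts j) * Pc S n a (pts j)
            + (2 * (w j * Pc S n a (pts j) * Pc S n b (pts j))
            + w j * Pc S n b (pts j) * Pc S n b (pts j))) := by
          refine Finset.sum_congr rfl fun j _ => ?_
          rw [Pc_add]
          ring
      _ = _ := by
          rw [Finset.sum_add_distrib, Finset.sum_add_distrib]
          simp only [← Finset.mul_sum]
          ring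
  have hQexm : ∀ a b, Q (Pc S n (fun ℓ k => a ℓ k - b ℓ k)) (Pc S n (fun ℓ k => a ℓ k - b ℓ k))
      = Q (Pc S n a) (Pc S n a) - 2 * Q (Pc S n a) (Pc S n b) + Q (Pc S n b) (Pc S n b) := by
    intro a b
    simp only [hQdef]
    calc ∑ j, w j * Pc S n (fun ℓ k => a ℓ k - b ℓ k) (pts j)
          * Pc S n (fun ℓ k => a ℓ k - b ℓ k) (pts j)
        = ∑ j, (w j * Pc S n a (pts j) * Pc S n a (pts j)
            + ((-2) * (w j * Pc S n a (pts j) * Pc S n b (pts j))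
            + w j * Pc S n b (pts j) * Pc S n b (pts j))) := by
          refine Finset.sum_congr rfl fun j _ => ?_
          rw [Pc_sub]
          ring
      _ = _ := by
          rw [Finset.sum_add_distrib, Finset.sum_add_distrib]
          simp only [← Finset.mul_sum]
          ring
  have hpolar : ∀ a b, |Q (Pc S n a) (Pc S n b) - I a b| ≤ η / 2 * (I a a + I b b) := by
    intro a b
    have hplus := hMZc (fun ℓ k => a ℓ k + b ℓ k)
    have hminus := hMZc (fun ℓ k => a ℓ k - b ℓ k)
    rw [hQexp a b, hIexp a b] at hplus
    rw [hQexm a b, hIexm a b] at hminus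
    have hb1 := abs_le.mp hplus
    have hb2 := abs_le.mp hminus
    rw [abs_le]
    constructor
    · linarith [hb1.1, hb2.2]
    · linarith [hb1.2, hb2.1]
  -- the coefficients of the hyperinterpolant of χ = Pc S n cs
  set β : (ℓ : ℕ) → Fin (Zdim d ℓ) → ℝ :=
    fun ℓ k => ∑ j, w j * Pc S n cs (pts j) * S.Y ℓ k (pts j) with hβ
  have hhyper : hyper S n m w pts (Pc S n cs) = Pc S n β := rfl
  have hA : Q (Pc S n cs) (Pc S n β) = I β β := by
    simp only [hQdef]
    rw [Q_Pc S n m w pts (Pc S n cs) β]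
  have hQχχ : Q (Pc S n cs) (Pc S n cs) = I β cs := by
    simp only [hQdef]
    rw [Q_Pc S n m w pts (Pc S n cs) cs]
  have hIcomm : I cs β = I β cs := by
    simp only [hIdef]
    exact Finset.sum_congr rfl fun ℓ _ => Finset.sum_congr rfl fun k _ => mul_comm _ _
  have hcsq0 : 0 ≤ I cs cs := hInn cs
  have hA'0 : 0 ≤ I β β := hInn β
  -- bound on ‖U_n χ‖² = I β β
  have hQcc : Q (Pc S n cs) (Pc S n cs) ≤ (1 + η) * I cs cs := by
    have := (abs_le.mp (hMZc cs)).2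
    linarith
  have hQbb : Q (Pc S n β) (Pc S n β) ≤ (1 + η) * I β β := by
    have := (abs_le.mp (hMZc β)).2
    linarith
  have hQcc0 : 0 ≤ Q (Pc S n cs) (Pc S n cs) := by
    rw [← hQsq]
    exact Finset.sum_nonneg fun j _ => mul_nonneg (hw j).le (sq_nonneg _)
  have hQbb0 : 0 ≤ Q (Pc S n β) (Pc S n β) := by
    rw [← hQsq]
    exact Finset.sum_nonneg fun j _ => mul_nonneg (hw j).le (sq_nonneg _)
  have hCS : (Q (Pc S n cs) (Pc S n β)) ^ 2
      ≤ Q (Pc S n cs) (Pc S n cs) * Q (Pc S n β) (Pc S n β) := by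
    have h := wCS w (fun j => (hw j).le)
      (fun j => Pc S n cs (pts j)) (fun j => Pc S n β (pts j))
    rw [hQsq, hQsq] at h
    exact h
  have hA'le : I β β ≤ (1 + η) ^ 2 * I cs cs := by
    rcases hA'0.lt_or_eq with hpos | h0
    · have hq : (I β β) ^ 2 ≤ (1 + η) * I cs cs * ((1 + η) * I β β) := by
        calc (I β β) ^ 2 = (Q (Pc S n cs) (Pc S n β)) ^ 2 := by rw [hA]
          _ ≤ Q (Pc S n cs) (Pc S n cs) * Q (Pc S n β) (Pc S n β) := hCS
          _ ≤ (1 + η) * I cs cs * ((1 + η) * I β β) :=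
              mul_le_mul hQcc hQbb hQbb0 (by positivity)
      have h2 : I β β * I β β ≤ (1 + η) ^ 2 * I cs cs * I β β := by nlinarith
      exact le_of_mul_le_mul_right h2 hpos
    · rw [← h0]
      positivity
  -- the two error terms
  have he1 : |I β β - I cs β| ≤ η / 2 * (I cs cs + I β β) := by
    have := hpolar cs β
    rwa [hA] at this
  have he2 : |I β cs - I cs cs| ≤ η * I cs cs := by
    have := hMZc cs
    rwa [hQχχ] at this
  -- the squared error
  have hDsq : ∫ x, (hyper S n m w pts (Pc S n cs) x - Pc S n cs x) ^ 2 ∂(sphMeasure d)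
      = I β β - 2 * I β cs + I cs cs := by
    rw [hhyper]
    have h1 : ∫ x, (Pc S n β x - Pc S n cs x) ^ 2 ∂(sphMeasure d)
        = ∫ x, Pc S n (fun ℓ k => β ℓ k - cs ℓ k) x
            * Pc S n (fun ℓ k => β ℓ k - cs ℓ k) x ∂(sphMeasure d) := by
      refine MeasureTheory.integral_congr_ae (Filter.Eventually.of_forall fun x => ?_)
      simp only [Pc_sub S n β cs x]
      ring
    rw [h1, hIint, hIexm β cs]
  have habs1 := abs_le.mp he1
  have habs2 := abs_le.mp he2
  have hDle : I β β - 2 * I β cs + I cs cs ≤ (η ^ 2 + 4 * η) * I cs cs := by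
    nlinarith [habs1.1, habs1.2, habs2.1, habs2.2, hA'le, hcsq0, hA'0]
  have hl2cs : l2Norm d (Pc S n cs) = Real.sqrt (I cs cs) := by
    rw [l2Norm, l2NormSq, ← hIint cs cs]
    congr 1
    exact MeasureTheory.integral_congr_ae (Filter.Eventually.of_forall fun x => by simp [sq])
  rw [l2Norm, l2NormSq, hDsq, hl2cs, ← Real.sqrt_mul (by positivity : (0:ℝ) ≤ η ^ 2 + 4 * η)]
  exact Real.sqrt_le_sqrt hDle

end Statement7Aux


/-- if the positive-weight quadrature rule satisfies the
Marcinkiewicz–Zygmund property with constant `η ∈ [0,1)` for degree `n` and integrates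
constants exactly (`Σ_j w_j = |S^d|`), then for `f ∈ C(S^d)`:
`‖U_n f‖_{L²} ≤ √(1+η)|S^d|^{1/2}‖f‖_∞` and
`‖U_n f − f‖_{L²} ≤ (√(1+η)+1)|S^d|^{1/2} E_n(f) + √(η²+4η)‖χ*‖_{L²}`. -/
theorem statement7 (d : ℕ) (hd : 2 ≤ d) (S : SHSetup d)
    (f : Sph d → ℝ) (hf : Continuous f)
    (n m : ℕ) (w : Fin m → ℝ) (hw : ∀ j, 0 < w j) (pts : Fin m → Sph d)
    (hsum : (∑ j, w j) = surfArea d)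
    (η : ℝ) (hη0 : 0 ≤ η) (hη1 : η < 1) (hMZ : MZProperty S n m w pts η)
    (χstar : Sph d → ℝ) (hχP : inPn S n χstar)
    (hχbest : supNorm d (fun x => f x - χstar x) = bestUnifErr S n f) :
    l2Norm d (hyper S n m w pts f) ≤
      Real.sqrt (1 + η) * Real.sqrt (surfArea d) * supNorm d f ∧
    l2Norm d (fun x => hyper S n m w pts f x - f x) ≤
      (Real.sqrt (1 + η) + 1) * Real.sqrt (surfArea d) * bestUnifErr S n f +
        Real.sqrt (η ^ 2 + 4 * η) * l2Norm d χstar := by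
  obtain ⟨hfin, hSpos⟩ := measure_facts hd S
  constructor
  · exact hyper_bound S n m w hw pts hsum η hη0 hMZ hf hfin
  · obtain ⟨cs, hχeq0⟩ := hχP
    have hχeq : χstar = Pc S n cs := hχeq0
    subst hχeq
    rw [← hχbest]
    set e : Sph d → ℝ := fun x => f x - Pc S n cs x with he
    have hecont : Continuous e := hf.sub (Pc_cont S n cs)
    have hc1 : Continuous (hyper S n m w pts e) := Pc_cont S n _
    have hc2 : Continuous (fun x => hyper S n m w pts (Pc S n cs) x - Pc S n cs x) :=
      (Pc_cont S n _ : Continuous (hyper S n m w pts (Pc S n cs))).sub (Pc_cont S n cs)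
    have hdec : (fun x => hyper S n m w pts f x - f x)
        = fun x => hyper S n m w pts e x
            + ((fun x => hyper S n m w pts (Pc S n cs) x - Pc S n cs x) x) - e x := by
      funext x
      have hlin : hyper S n m w pts f x
          = hyper S n m w pts e x + hyper S n m w pts (Pc S n cs) x := by
        simp only [hyper]
        rw [← Finset.sum_add_distrib]
        refine Finset.sum_congr rfl fun ℓ _ => ?_
        rw [← Finset.sum_add_distrib]
        refine Finset.sum_congr rfl fun k _ => ?_
        rw [← add_mul]
        congr 1
        rw [← Finset.sum_add_distrib]
        refine Finset.sum_congr rfl fun j _ => ?_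
        have hee : e (pts j) = f (pts j) - Pc S n cs (pts j) := rfl
        rw [hee]
        ring
      have hex : e x = f x - Pc S n cs x := rfl
      simp only
      rw [hlin, hex]
      ring
    rw [hdec]
    have h1 := hyper_bound S n m w hw pts hsum η hη0 hMZ hecont hfin
    have h2 := hyper_poly S n m w hw pts η hη0 hη1 hMZ hfin cs
    have h3 := l2Norm_le_sup hfin hecont
    have htri := l2_triangle3 hfin hc1 hc2 hecont
    calc l2Norm d (fun x => hyper S n m w pts e x
          + ((fun x => hyper S n m w pts (Pc S n cs) x - Pc S n cs x) x) - e x)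
        ≤ l2Norm d (hyper S n m w pts e)
            + l2Norm d (fun x => hyper S n m w pts (Pc S n cs) x - Pc S n cs x)
            + l2Norm d e := htri
      _ ≤ Real.sqrt (1 + η) * Real.sqrt (surfArea d) * supNorm d e
            + Real.sqrt (η ^ 2 + 4 * η) * l2Norm d (Pc S n cs)
            + Real.sqrt (surfArea d) * supNorm d e := by
          exact add_le_add (add_le_add h1 h2) h3
      _ = (Real.sqrt (1 + η) + 1) * Real.sqrt (surfArea d) * supNorm d e
            + Real.sqrt (η ^ 2 + 4 * η) * l2Norm d (Pc S n cs) := by ring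


end
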